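/- Let n = 2 in the piecewise Möbius welding normalization: if ω is a C¹ increasing homeomorphism of the extended real line, Möbius on (−∞,0), on (0,1), and on (1,∞), fixing ∞ with ω'(∞) = 1, ω(0) = 0 and ω(1) = y₂ > 0, then ω is the identity map. In particular y₂ = 1. -/

import Mathlib

open Filter Set Topology

private lemma key_eq' {f g : ℝ → ℝ} {a : ℝ} {S : Set ℝ} (hS : (𝓝[S] a).NeBot)
    (hf : ContinuousAt f a) (hg : ContinuousAt g a)
    (h : ∀ x ∈ S, f x = g x) : f a = g a := by
  have hfe : f =ᶠ[𝓝[S] a] g := by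
    filter_upwards [eventually_mem_nhdsWithin] with x hx using h x hx
  exact tendsto_nhds_unique (hf.continuousWithinAt)
    ((hg.continuousWithinAt).congr' hfe.symm)



/-- n = 2 case of the piecewise Möbius welding normalization: if `ω` is a C¹
increasing homeomorphism of `ℝ` which is affine with slope 1 on `(-∞,0)` and on
`(1,∞)` (i.e. fixes `∞` with `ω'(∞) = 1`), is an increasing Möbius map on
`(0,1)`, and satisfies `ω(0) = 0` and `ω(1) = y₂ > 0`, then `ω` is the identity
map; in particular `y₂ = 1`. -/
theorem welding_two_pieces_is_identity
    (y₂ : ℝ) (hy₂ : 0 < y₂)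
    (ω : ℝ → ℝ) (hmono : StrictMono ω) (hsurj : Function.Surjective ω)
    (hC1 : ContDiff ℝ 1 ω)
    (hleft : ∃ b : ℝ, ∀ x : ℝ, x < 0 → ω x = x + b)
    (hright : ∃ b : ℝ, ∀ x : ℝ, 1 < x → ω x = x + b)
    (hmid : ∃ p q r s : ℝ, p * s - q * r > 0 ∧
      ∀ x ∈ Set.Ioo (0 : ℝ) 1, r * x + s ≠ 0 ∧ ω x = (p * x + q) / (r * x + s))
    (h0 : ω 0 = 0) (h1 : ω 1 = y₂) :
    (∀ x : ℝ, ω x = x) ∧ y₂ = 1 := by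
  obtain ⟨b, hb⟩ := hleft
  obtain ⟨b', hb'⟩ := hright
  obtain ⟨p, q, r, s, hdet, hpq⟩ := hmid
  have hcont : Continuous ω := hC1.continuous
  have hcd : Continuous (deriv ω) := hC1.continuous_deriv le_rfl
  have hNB0 : (𝓝[Set.Ioo (0:ℝ) 1] 0).NeBot := by
    rw [nhdsWithin_Ioo_eq_nhdsGT (by norm_num : (0:ℝ) < 1)]; infer_instance
  have hNB1 : (𝓝[Set.Ioo (0:ℝ) 1] 1).NeBot := by
    rw [nhdsWithin_Ioo_eq_nhdsLT (by norm_num : (0:ℝ) < 1)]; infer_instance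
  -- b = 0
  have hb0 : ω 0 = 0 + b := by
    refine key_eq' (f := ω) (g := fun x => x + b) (S := Iio 0) ?_
      hcont.continuousAt (by fun_prop) (fun x hx => hb x hx)
    infer_instance
  have hbz : b = 0 := by linarith [hb0, h0]
  -- ω 1 = 1 + b'
  have hb1 : ω 1 = 1 + b' := by
    refine key_eq' (f := ω) (g := fun x => x + b') (S := Ioi 1) ?_
      hcont.continuousAt (by fun_prop) (fun x hx => hb' x hx)
    infer_instance
  -- q = 0
  have hq : (r * 0 + s) * ω 0 = p * 0 + q := by
    refine key_eq' (f := fun x => (r * x + s) * ω x) (g := fun x => p * x + q)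
      hNB0 (by fun_prop) (by fun_prop) (fun x hx => ?_)
    have h := hpq x hx
    rw [h.2]; field_simp [h.1]
  have hq0 : q = 0 := by rw [h0] at hq; linarith [hq]
  -- (r+s) y₂ = p + q
  have hp1 : (r * 1 + s) * ω 1 = p * 1 + q := by
    refine key_eq' (f := fun x => (r * x + s) * ω x) (g := fun x => p * x + q)
      hNB1 (by fun_prop) (by fun_prop) (fun x hx => ?_)
    have h := hpq x hx
    rw [h.2]; field_simp [h.1]
  -- deriv ω = 1 on Iio 0 and Ioi 1
  have hdL : ∀ x : ℝ, x < 0 → deriv ω x = 1 := by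
    intro x hx
    have he : ω =ᶠ[𝓝 x] (fun y => y + b) := by
      filter_upwards [Iio_mem_nhds hx] with y hy using hb y hy
    rw [he.deriv_eq]
    simp
  have hdR : ∀ x : ℝ, 1 < x → deriv ω x = 1 := by
    intro x hx
    have he : ω =ᶠ[𝓝 x] (fun y => y + b') := by
      filter_upwards [Ioi_mem_nhds hx] with y hy using hb' y hy
    rw [he.deriv_eq]
    simp
  have hd0 : deriv ω 0 = 1 := by
    refine key_eq' (f := deriv ω) (g := fun _ => 1) (S := Iio 0) ?_
      hcd.continuousAt (by fun_prop) (fun x hx => hdL x hx)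
    infer_instance
  have hd1 : deriv ω 1 = 1 := by
    refine key_eq' (f := deriv ω) (g := fun _ => 1) (S := Ioi 1) ?_
      hcd.continuousAt (by fun_prop) (fun x hx => hdR x hx)
    infer_instance
  -- deriv on Ioo
  have hdM : ∀ x ∈ Set.Ioo (0:ℝ) 1, (r * x + s)^2 * deriv ω x = p * s - q * r := by
    intro x hx
    have hne := (hpq x hx).1
    have he : ω =ᶠ[𝓝 x] (fun y => (p * y + q) / (r * y + s)) := by
      filter_upwards [isOpen_Ioo.mem_nhds hx] with y hy using (hpq y hy).2
    have hnum : HasDerivAt (fun y : ℝ => p * y + q) p x := by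
      simpa using ((hasDerivAt_id x).const_mul p).add_const q
    have hden : HasDerivAt (fun y : ℝ => r * y + s) r x := by
      simpa using ((hasDerivAt_id x).const_mul r).add_const s
    have hdiv := hnum.div hden hne
    rw [he.deriv_eq, show (fun y => (p * y + q) / (r * y + s)) = ((fun y => p * y + q) / fun y => r * y + s) from rfl, hdiv.deriv]
    field_simp
    ring
  have hE1 : (r * 0 + s)^2 * deriv ω 0 = p * s - q * r := by
    exact key_eq' (f := fun x => (r * x + s)^2 * deriv ω x) (g := fun _ => p * s - q * r)
      hNB0 (by fun_prop) (by fun_prop) hdM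
  have hE2 : (r * 1 + s)^2 * deriv ω 1 = p * s - q * r := by
    exact key_eq' (f := fun x => (r * x + s)^2 * deriv ω x) (g := fun _ => p * s - q * r)
      hNB1 (by fun_prop) (by fun_prop) hdM
  rw [hd0] at hE1
  rw [hd1] at hE2
  rw [h1] at hp1
  -- algebra: s^2 = p*s, (r+s)^2 = p*s (using q = 0), (r+s) y₂ = p
  have hs2 : s^2 = p * s := by rw [hq0] at hE1; linarith [hE1]
  have hrs2 : (r + s)^2 = p * s := by rw [hq0] at hE2; nlinarith [hE2]
  have hps : p * s > 0 := by rw [hq0] at hdet; linarith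
  have hsne : s ≠ 0 := by intro h; rw [h] at hs2; nlinarith
  have hps' : p = s := by
    have : s * (s - p) = 0 := by ring_nf; nlinarith [hs2]
    rcases mul_eq_zero.mp this with h | h
    · exact absurd h hsne
    · linarith
  have hrcase : r = 0 ∨ r = -2 * s := by
    have : r * (r + 2*s) = 0 := by nlinarith [hrs2, hs2]
    rcases mul_eq_zero.mp this with h | h
    · left; exact h
    · right; linarith
  have hr0 : r = 0 := by
    rcases hrcase with h | h
    · exact h
    · exfalso
      -- (r+s) y₂ = p = s, with r+s = -s : -s y₂ = s → y₂ = -1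
      rw [hq0, hps', h] at hp1
      have : -s * y₂ = s := by linarith [hp1]
      have hy : y₂ = -1 := by
        have h2 : s * y₂ = s * (-1) := by linarith
        exact mul_left_cancel₀ hsne h2
      linarith
  have hy1 : y₂ = 1 := by
    rw [hq0, hps', hr0] at hp1
    have h2 : s * y₂ = s * 1 := by linarith [hp1]
    exact mul_left_cancel₀ hsne h2
  refine ⟨fun x => ?_, hy1⟩
  rcases lt_trichotomy x 0 with hx | hx | hx
  · rw [hb x hx, hbz, add_zero]
  · rw [hx, h0]
  · rcases lt_trichotomy x 1 with hx1 | hx1 | hx1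
    · have h := (hpq x ⟨hx, hx1⟩).2
      rw [h, hq0, hps', hr0]
      simp [hsne]
    · rw [hx1, h1, hy1]
    · have hbz' : b' = 0 := by
        have := hb1; rw [h1, hy1] at this; linarith
      rw [hb' x hx1, hbz', add_zero]
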